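/- For the polynomial P_6(z) = z + ((9+8√2)/(4√2+8))z² + ((6√2+10)/(4√2+8))z³ + ((4√2+6)/(4√2+8))z⁴ + ((2√2+2)/(4√2+8))z⁵ + (1/(4√2+8))z⁶ and every real t, one has 4·|P_6(e^{it})|² = 2 + (8√2−4)·cos t + (38−12√2)·cos²t + (28√2−4)·cos³t + (28√2−10)·cos⁴t + (32−16√2)·cos⁵t. -/

import Mathlib

/-- The polynomial `P₆(z) = z + ((9+8√2)/(4√2+8))z² + ((6√2+10)/(4√2+8))z³ + ((4√2+6)/(4√2+8))z⁴
+ ((2√2+2)/(4√2+8))z⁵ + (1/(4√2+8))z⁶`. -/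
noncomputable def P6 (z : ℂ) : ℂ :=
  z + (((9 + 8 * Real.sqrt 2) / (4 * Real.sqrt 2 + 8) : ℝ) : ℂ) * z ^ 2 +
    (((6 * Real.sqrt 2 + 10) / (4 * Real.sqrt 2 + 8) : ℝ) : ℂ) * z ^ 3 +
    (((4 * Real.sqrt 2 + 6) / (4 * Real.sqrt 2 + 8) : ℝ) : ℂ) * z ^ 4 +
    (((2 * Real.sqrt 2 + 2) / (4 * Real.sqrt 2 + 8) : ℝ) : ℂ) * z ^ 5 +
    ((1 / (4 * Real.sqrt 2 + 8) : ℝ) : ℂ) * z ^ 6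

set_option maxHeartbeats 2000000 in
theorem stmt15 (t : ℝ) :
    4 * ‖P6 (Complex.exp (Complex.I * t))‖ ^ 2 =
      2 + (8 * Real.sqrt 2 - 4) * Real.cos t + (38 - 12 * Real.sqrt 2) * Real.cos t ^ 2 +
        (28 * Real.sqrt 2 - 4) * Real.cos t ^ 3 + (28 * Real.sqrt 2 - 10) * Real.cos t ^ 4 +
        (32 - 16 * Real.sqrt 2) * Real.cos t ^ 5 := by
  set r := Real.sqrt 2 with hrdef
  set c := Real.cos t with hcdef
  set s := Real.sin t with hsdef
  have hr : r ^ 2 = 2 := Real.sq_sqrt (by norm_num)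
  have hr0 : (0:ℝ) ≤ r := Real.sqrt_nonneg 2
  have hden : (4 * r + 8 : ℝ) ≠ 0 := by positivity
  have hdenC : ((4 * r + 8 : ℝ) : ℂ) ≠ 0 := by exact_mod_cast hden
  have hsc : s ^ 2 = 1 - c ^ 2 := by
    have := Real.sin_sq_add_cos_sq t; rw [← hcdef, ← hsdef] at this; linarith
  have hz : Complex.exp (Complex.I * t) = (c : ℂ) + (s : ℂ) * Complex.I := by
    rw [mul_comm, Complex.exp_mul_I, ← Complex.ofReal_cos, ← Complex.ofReal_sin]
  have hP : ((4 * r + 8 : ℝ) : ℂ) * P6 (Complex.exp (Complex.I * t)) =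
      ((4 * r + 8 : ℝ) : ℂ) * ((c : ℂ) + (s : ℂ) * Complex.I)
        + ((9 + 8 * r : ℝ) : ℂ) * ((c : ℂ) + (s : ℂ) * Complex.I) ^ 2
        + ((6 * r + 10 : ℝ) : ℂ) * ((c : ℂ) + (s : ℂ) * Complex.I) ^ 3
        + ((4 * r + 6 : ℝ) : ℂ) * ((c : ℂ) + (s : ℂ) * Complex.I) ^ 4
        + ((2 * r + 2 : ℝ) : ℂ) * ((c : ℂ) + (s : ℂ) * Complex.I) ^ 5
        + ((c : ℂ) + (s : ℂ) * Complex.I) ^ 6 := by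
    rw [P6, hz, ← hrdef]
    push_cast
    have h9 : (4 * (r:ℂ) + 8) ≠ 0 := by
      intro h; apply hden; exact_mod_cast (by push_cast; exact h : ((4*r+8 : ℝ):ℂ) = 0)
    field_simp
  have h2 : ((4 * r + 8 : ℝ)) ^ 2 * Complex.normSq (P6 (Complex.exp (Complex.I * t))) =
      Complex.normSq (((4 * r + 8 : ℝ) : ℂ) * ((c : ℂ) + (s : ℂ) * Complex.I)
        + ((9 + 8 * r : ℝ) : ℂ) * ((c : ℂ) + (s : ℂ) * Complex.I) ^ 2
        + ((6 * r + 10 : ℝ) : ℂ) * ((c : ℂ) + (s : ℂ) * Complex.I) ^ 3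
        + ((4 * r + 6 : ℝ) : ℂ) * ((c : ℂ) + (s : ℂ) * Complex.I) ^ 4
        + ((2 * r + 2 : ℝ) : ℂ) * ((c : ℂ) + (s : ℂ) * Complex.I) ^ 5
        + ((c : ℂ) + (s : ℂ) * Complex.I) ^ 6) := by
    rw [← hP, Complex.normSq_mul, Complex.normSq_ofReal]; ring
  rw [Complex.sq_norm]
  have hpos : ((4 * r + 8 : ℝ)) ^ 2 ≠ 0 := pow_ne_zero _ hden
  apply mul_left_cancel₀ hpos
  rw [show ((4 * r + 8 : ℝ)) ^ 2 * (4 * Complex.normSq (P6 (Complex.exp (Complex.I * t)))) =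
      4 * (((4 * r + 8 : ℝ)) ^ 2 * Complex.normSq (P6 (Complex.exp (Complex.I * t)))) by ring, h2]
  simp only [Complex.normSq_apply, Complex.add_re, Complex.add_im, Complex.mul_re,
    Complex.mul_im, Complex.ofReal_re, Complex.ofReal_im, Complex.I_re, Complex.I_im,
    pow_succ, pow_zero, one_mul]
  ring_nf
  linear_combination ((-32) + (-448)*c^1 + (224)*c^2 + (-1472)*c^3 + (-1184)*c^4 + (1024)*c^5 + (464)*c^6 + (320)*c^7 + (160)*c^8 + (64)*c^9 + (16)*c^10 + (64)*s^2 + (256)*s^2*c^1 + (512)*s^2*c^2 + (512)*s^2*c^3 + (368)*s^2*c^4 + (448)*s^2*c^5 + (448)*s^2*c^6 + (256)*s^2*c^7 + (80)*s^2*c^8 + (64)*s^4 + (-144)*s^4*c^2 + (-64)*s^4*c^3 + (384)*s^4*c^4 + (384)*s^4*c^5 + (160)*s^4*c^6 + (-48)*s^6 + (-192)*s^6*c^1 + (64)*s^6*c^2 + (256)*s^6*c^3 + (160)*s^6*c^4 + (-32)*s^8 + (64)*s^8*c^1 + (80)*s^8*c^2 + (16)*s^10 + (-128)*r^1*c^1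 + (192)*r^1*c^2 + (-448)*r^1*c^3 + (-448)*r^1*c^4 + (256)*r^1*c^5) * hr + ((192) + (640)*c^1 + (1920)*c^2 + (2752)*c^3 + (2684)*c^4 + (1648)*c^5 + (796)*c^6 + (320)*c^7 + (100)*c^8 + (16)*c^9 + (4)*c^10 + (-192)*s^2 + (-448)*s^2*c^1 + (56)*s^2*c^2 + (608)*s^2*c^3 + (1012)*s^2*c^4 + (640)*s^2*c^5 + (304)*s^2*c^6 + (64)*s^2*c^7 + (20)*s^2*c^8 + (-4)*s^4 + (-16)*s^4*c^1 + (212)*s^4*c^2 + (320)*s^4*c^3 + (312)*s^4*c^4 + (96)*s^4*c^5 + (40)*s^4*c^6 + (-4)*s^6 + (112)*s^6*c^2 + (64)*s^6*c^3 + (40)*s^6*c^4 + (4)*s^8 + (16)*s^8*c^1 + (20)*s^8*c^2 + (4)*s^10 + (128)*r^1 + (512)*r^1*c^1 + (1152)*r^1*c^2 + (2144)*r^1*c^3 + (1920)*r^1*c^4 + (1136)*r^1*c^5 + (576)*r^1*c^6 + (224)*r^1*c^7 + (64)*r^1*c^8 + (16)*r^1*c^9 + (-128)*r^1*s^2 +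 (-288)*r^1*s^2*c^1 + (-128)*r^1*s^2*c^2 + (608)*r^1*s^2*c^3 + (640)*r^1*s^2*c^4 + (480)*r^1*s^2*c^5 + (192)*r^1*s^2*c^6 + (64)*r^1*s^2*c^7 + (-16)*r^1*s^4*c^1 + (64)*r^1*s^4*c^2 + (288)*r^1*s^4*c^3 + (192)*r^1*s^4*c^4 + (96)*r^1*s^4*c^5 + (32)*r^1*s^6*c^1 + (64)*r^1*s^6*c^2 + (64)*r^1*s^6*c^3 + (16)*r^1*s^8*c^1) * hsc
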